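/- The polynomial $t_n(x)^2 - (1-x)$, where $t_n(x) = \sum_{k=0}^n \binom{1/2}{k}(-x)^k$ is the $n$-th Taylor polynomial of $\sqrt{1-x}$, has nonnegative coefficients (which lie in $\mathbb{Z}[1/2]$). -/

import Mathlib

open Polynomial Finset

/-- The `n`-th Taylor polynomial of `√(1-x)`:
`t_n(x) = ∑_{k=0}^n binom(1/2, k) (-x)^k`, with coefficients in `ℚ`. -/
noncomputable def taylorSqrt (n : ℕ) : Polynomial ℚ :=
  ∑ k ∈ Finset.range (n + 1),
    Polynomial.C ((∏ i ∈ Finset.range k, ((1 : ℚ) / 2 - (i : ℚ))) / (k.factorial : ℚ)) *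
      (-Polynomial.X) ^ k

noncomputable def tsA (k : ℕ) : ℚ :=
  (∏ i ∈ Finset.range k, ((1 : ℚ) / 2 - (i : ℚ))) / (k.factorial : ℚ) * (-1) ^ k

lemma descPoch_smeval_eq_prod (r : ℚ) (k : ℕ) :
    (descPochhammer ℤ k).smeval r = ∏ i ∈ Finset.range k, (r - (i : ℚ)) := by
  induction k with
  | zero => simp [smeval_one]
  | succ k ih =>
    rw [descPochhammer_succ_right, smeval_mul, ih, Finset.prod_range_succ]
    congr 1
    simp [smeval_sub, smeval_X, smeval_natCast]

lemma choose_half (k : ℕ) :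
    Ring.choose ((1:ℚ)/2) k
      = (∏ i ∈ Finset.range k, ((1 : ℚ) / 2 - (i : ℚ))) / (k.factorial : ℚ) := by
  have h := Ring.descPochhammer_eq_factorial_smul_choose ((1:ℚ)/2) k
  rw [descPoch_smeval_eq_prod] at h
  rw [h, nsmul_eq_mul]
  field_simp

lemma tsA_conv (k : ℕ) :
    ∑ i ∈ Finset.range (k + 1), tsA i * tsA (k - i)
      = if k = 0 then 1 else if k = 1 then -1 else 0 := by
  have vand := Ring.add_choose_eq (R := ℚ) (r := (1:ℚ)/2) (s := (1:ℚ)/2) k (Commute.all _ _)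
  rw [Finset.Nat.sum_antidiagonal_eq_sum_range_succ_mk] at vand
  have h1 : ((1:ℚ)/2 + 1/2) = ((1:ℕ):ℚ) := by norm_num
  rw [h1, Ring.choose_natCast] at vand
  have key : ∑ i ∈ Finset.range (k + 1), tsA i * tsA (k - i)
      = (-1)^k * ∑ i ∈ Finset.range (k + 1),
          Ring.choose ((1:ℚ)/2) i * Ring.choose ((1:ℚ)/2) (k - i) := by
    rw [Finset.mul_sum]
    refine Finset.sum_congr rfl fun i hi => ?_
    rw [choose_half, choose_half, tsA, tsA]
    have hik : i ≤ k := Nat.lt_succ_iff.mp (Finset.mem_range.mp hi)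
    have : (-1:ℚ)^i * (-1)^(k-i) = (-1)^k := by
      rw [← pow_add, Nat.add_sub_cancel' hik]
    rw [mul_mul_mul_comm, this]; ring
  have vand' : ∑ i ∈ Finset.range (k + 1),
      Ring.choose ((1:ℚ)/2) i * Ring.choose ((1:ℚ)/2) (k - i) = (Nat.choose 1 k : ℚ) := by
    simpa using vand.symm
  rw [key, vand']
  rcases k with _ | _ | k <;> simp [Nat.choose]

lemma tsA_zero : tsA 0 = 1 := by simp [tsA]

lemma tsA_one : tsA 1 = -(1/2) := by
  simp [tsA, Finset.prod_range_one]

lemma tsA_nonpos (k : ℕ) (hk : 1 ≤ k) : tsA k ≤ 0 := by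
  have key : ∀ m : ℕ, 1 ≤ m → (-1:ℚ)^m * ∏ i ∈ Finset.range m, ((1:ℚ)/2 - i) ≤ 0 := by
    intro m hm
    induction m, hm using Nat.le_induction with
    | base => norm_num [Finset.prod_range_one]
    | succ m hm ih =>
      rw [Finset.prod_range_succ, pow_succ]
      have h2 : ((1:ℚ)/2 - m) ≤ 0 := by
        have : (1:ℚ) ≤ (m:ℚ) := by exact_mod_cast hm
        linarith
      have := mul_nonneg (neg_nonneg.mpr ih) (neg_nonneg.mpr h2)
      nlinarith
  have h := key k hk
  have hfac : (0:ℚ) < (k.factorial : ℚ) := by exact_mod_cast k.factorial_pos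
  rw [tsA]
  rw [div_mul_eq_mul_div]
  apply div_nonpos_of_nonpos_of_nonneg _ hfac.le
  nlinarith [key k hk]

def Dyadic' (q : ℚ) : Prop := ∃ (z : ℤ) (m : ℕ), q = (z : ℚ) / 2 ^ m

lemma Dyadic'.add {a b : ℚ} (ha : Dyadic' a) (hb : Dyadic' b) : Dyadic' (a + b) := by
  obtain ⟨z1, m1, rfl⟩ := ha; obtain ⟨z2, m2, rfl⟩ := hb
  refine ⟨z1 * 2 ^ m2 + z2 * 2 ^ m1, m1 + m2, ?_⟩
  push_cast
  rw [div_add_div _ _ (by positivity : ((2:ℚ)^m1) ≠ 0) (by positivity : ((2:ℚ)^m2) ≠ 0), pow_add]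
  ring_nf

lemma Dyadic'.mul {a b : ℚ} (ha : Dyadic' a) (hb : Dyadic' b) : Dyadic' (a * b) := by
  obtain ⟨z1, m1, rfl⟩ := ha; obtain ⟨z2, m2, rfl⟩ := hb
  refine ⟨z1 * z2, m1 + m2, ?_⟩
  push_cast
  rw [div_mul_div_comm, pow_add]

lemma Dyadic'.neg {a : ℚ} (ha : Dyadic' a) : Dyadic' (-a) := by
  obtain ⟨z, m, rfl⟩ := ha; exact ⟨-z, m, by push_cast; ring⟩

lemma Dyadic'.zero : Dyadic' 0 := ⟨0, 0, by norm_num⟩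
lemma Dyadic'.one : Dyadic' 1 := ⟨1, 0, by norm_num⟩
lemma Dyadic'.half : Dyadic' (1/2) := ⟨1, 1, by norm_num⟩

lemma Dyadic'.sum (s : Finset ℕ) (f : ℕ → ℚ) (h : ∀ i ∈ s, Dyadic' (f i)) :
    Dyadic' (∑ i ∈ s, f i) :=
  Finset.sum_induction f Dyadic' (fun _ _ => Dyadic'.add) Dyadic'.zero h

lemma tsA_dyadic (k : ℕ) : Dyadic' (tsA k) := by
  induction k using Nat.strong_induction_on with
  | _ k ih =>
    match k with
    | 0 => rw [tsA_zero]; exact Dyadic'.one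
    | 1 => rw [tsA_one]; exact Dyadic'.half.neg
    | (m + 2) =>
      have h := tsA_conv (m + 2)
      simp only [Nat.succ_ne_zero, if_false, show m + 2 ≠ 1 by omega] at h
      rw [Finset.sum_range_succ'] at h
      rw [Finset.sum_range_succ] at h
      simp only [Nat.sub_self, tsA_zero, Nat.sub_zero, one_mul, mul_one] at h
      set S := ∑ i ∈ Finset.range (m + 1), tsA (i + 1) * tsA (m + 2 - (i + 1)) with hS
      have hSd : Dyadic' S := by
        apply Dyadic'.sum
        intro i hi
        have hi' : i < m + 1 := Finset.mem_range.mp hi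
        exact (ih (i + 1) (by omega)).mul (ih (m + 2 - (i + 1)) (by omega))
      have heq : tsA (m + 2) = -S * (1/2) := by
        have hmm : tsA (m + 1 + 1) = tsA (m + 2) := by norm_num
        rw [hmm] at h
        linarith
      rw [heq]
      exact hSd.neg.mul Dyadic'.half

lemma taylorSqrt_coeff (n j : ℕ) :
    (taylorSqrt n).coeff j = if j ≤ n then tsA j else 0 := by
  rw [taylorSqrt, Polynomial.finset_sum_coeff]
  have h : ∀ i, (Polynomial.C ((∏ l ∈ Finset.range i, ((1 : ℚ) / 2 - (l : ℚ))) /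
      (i.factorial : ℚ)) * (-Polynomial.X) ^ i).coeff j = if i = j then tsA i else 0 := by
    intro i
    have hneg : ((-X : Polynomial ℚ)) ^ i = Polynomial.C ((-1)^i) * X ^ i := by
      rw [neg_pow, ← Polynomial.C_1, ← Polynomial.C_neg, ← Polynomial.C_pow]
    rw [hneg, ← mul_assoc, ← Polynomial.C_mul, Polynomial.coeff_C_mul, Polynomial.coeff_X_pow]
    by_cases hij : i = j
    · simp [hij, tsA, mul_comm]
    · rw [if_neg (fun h => hij h.symm), mul_zero, if_neg hij]
  simp only [h]
  rw [Finset.sum_ite_eq']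
  simp [Nat.lt_succ_iff]

theorem taylorSqrt_sq_sub_nonneg_coeff (n : ℕ) (k : ℕ) :
    0 ≤ ((taylorSqrt n) ^ 2 - (1 - Polynomial.X)).coeff k ∧
      ∃ (z : ℤ) (m : ℕ),
        ((taylorSqrt n) ^ 2 - (1 - Polynomial.X)).coeff k = (z : ℚ) / 2 ^ m := by
  have h1X : (1 - (Polynomial.X : Polynomial ℚ)).coeff k
      = if k = 0 then 1 else if k = 1 then -1 else 0 := by
    rcases k with _ | _ | k <;>
      simp [Polynomial.coeff_one, Polynomial.coeff_X, Polynomial.coeff_sub]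
  have hc : ((taylorSqrt n) ^ 2 - (1 - Polynomial.X)).coeff k
      = (∑ i ∈ Finset.range (k + 1),
          (if i ≤ n then tsA i else 0) * (if k - i ≤ n then tsA (k - i) else 0))
        - (if k = 0 then 1 else if k = 1 then -1 else 0) := by
    rw [Polynomial.coeff_sub, h1X, sq, Polynomial.coeff_mul,
      Finset.Nat.sum_antidiagonal_eq_sum_range_succ_mk]
    simp only [taylorSqrt_coeff]
  rw [hc]
  constructor
  · by_cases hk : k ≤ n
    · have hsum : ∑ i ∈ Finset.range (k + 1),
          (if i ≤ n then tsA i else 0) * (if k - i ≤ n then tsA (k - i) else 0)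
          = ∑ i ∈ Finset.range (k + 1), tsA i * tsA (k - i) := by
        refine Finset.sum_congr rfl fun i hi => ?_
        have hik : i ≤ k := Nat.lt_succ_iff.mp (Finset.mem_range.mp hi)
        rw [if_pos (le_trans hik hk), if_pos (le_trans (Nat.sub_le k i) hk)]
      rw [hsum, tsA_conv]
      simp
    · push_neg at hk
      have hterm : ∀ i ∈ Finset.range (k + 1),
          0 ≤ (if i ≤ n then tsA i else 0) * (if k - i ≤ n then tsA (k - i) else 0) := by
        intro i hi
        by_cases h1 : i ≤ n
        · by_cases h2 : k - i ≤ n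
          · rw [if_pos h1, if_pos h2]
            have hik : i ≤ k := Nat.lt_succ_iff.mp (Finset.mem_range.mp hi)
            have hi1 : 1 ≤ i := by omega
            have hki1 : 1 ≤ k - i := by omega
            nlinarith [tsA_nonpos i hi1, tsA_nonpos (k - i) hki1]
          · rw [if_neg h2, mul_zero]
        · rw [if_neg h1, zero_mul]
      have hsum := Finset.sum_nonneg hterm
      have hk1 : k ≠ 0 := by omega
      rw [if_neg hk1]
      have hc1 : (if k = 1 then (-1:ℚ) else 0) ≤ 0 := by split <;> norm_num
      linarith
  · have hd : Dyadic' ((∑ i ∈ Finset.range (k + 1),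
        (if i ≤ n then tsA i else 0) * (if k - i ≤ n then tsA (k - i) else 0))
        - (if k = 0 then 1 else if k = 1 then -1 else 0)) := by
      rw [sub_eq_add_neg]
      apply Dyadic'.add
      · apply Dyadic'.sum
        intro i _
        apply Dyadic'.mul <;> split <;>
          first | exact tsA_dyadic _ | exact Dyadic'.zero
      · apply Dyadic'.neg
        split
        · exact Dyadic'.one
        split
        · exact Dyadic'.one.neg
        · exact Dyadic'.zero
    exact hd
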